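/- Let ψ : [0,∞) → [0,∞), ψ(0) = 0, be continuous, strictly increasing and onto, satisfying property (d₂^loc): limsup_{s↓0} ψ^{−1}(2ψ(s))/s < ∞, and property (Δ₂^loc): limsup_{s↓0} ψ(2s)/ψ(s) < ∞. Then for any continuous path x : [0,1] → (E,d) into a metric space, V_ψ(x;[0,1]) := sup over dissections D of [0,1] of Σ_i ψ(d(x_{t_i},x_{t_{i+1}})) is finite if and only if |x|_{ψ-var;[0,1]} := inf{ ε > 0 : sup_D Σ_i ψ(d(x_{t_i},x_{t_{i+1}})/ε) ≤ 1 } is finite. -/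

import Mathlib

open MeasureTheory Filter Set
open scoped ENNReal NNReal Topology

noncomputable section

/-- A dissection `a = t 0 < t 1 < ... < t n = b` of the interval `[a,b]`. -/
def IsDiss {n : ℕ} (t : Fin (n + 1) → ℝ) (a b : ℝ) : Prop :=
  StrictMono t ∧ t 0 = a ∧ t (Fin.last n) = b

/-- STATEMENT 17: Suppose `ψ : [0,∞) → [0,∞)`, `ψ(0) = 0`, is continuous, strictly
increasing and onto, and has the properties `(d₂^loc)` (for every `T > 0` there is `d₂`
with `2ψ(s) ≤ ψ(d₂ s)` on `[0,T]`) and `(Δ₂^loc)` (for every `T > 0` there is `Δ₂` with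
`ψ(2s) ≤ Δ₂ ψ(s)` on `[0,T]`).  Then for every continuous path `x : [0,1] → (E,d)`,
`V_ψ(x;[0,1]) < ∞` iff `|x|_{ψ-var;[0,1]} < ∞` (i.e. some `ε > 0` is admissible). -/
theorem psi_variation_iff_psi_var_norm_finite
    {E : Type*} [MetricSpace E]
    (ψ : ℝ → ℝ) (hψ0 : ψ 0 = 0)
    (hψ_cont : ContinuousOn ψ (Ici 0))
    (hψ_mono : StrictMonoOn ψ (Ici 0))
    (hψ_onto : ∀ y : ℝ, 0 ≤ y → ∃ s : ℝ, 0 ≤ s ∧ ψ s = y)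
    (hd2loc : ∀ T : ℝ, 0 < T → ∃ d₂ : ℝ, 0 < d₂ ∧ ∀ s ∈ Icc (0 : ℝ) T, 2 * ψ s ≤ ψ (d₂ * s))
    (hΔ2loc : ∀ T : ℝ, 0 < T → ∃ Δ₂ : ℝ, 0 < Δ₂ ∧ ∀ s ∈ Icc (0 : ℝ) T, ψ (2 * s) ≤ Δ₂ * ψ s)
    (x : ℝ → E) (hx : ContinuousOn x (Icc (0 : ℝ) 1)) :
    (∃ M : ℝ, ∀ (n : ℕ) (t : Fin (n + 1) → ℝ), IsDiss t 0 1 →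
        ∑ i : Fin n, ψ (dist (x (t i.castSucc)) (x (t i.succ))) ≤ M)
    ↔ (∃ ε : ℝ, 0 < ε ∧ ∀ (n : ℕ) (t : Fin (n + 1) → ℝ), IsDiss t 0 1 →
        ∑ i : Fin n, ψ (dist (x (t i.castSucc)) (x (t i.succ)) / ε) ≤ 1) := by
  have hmono : MonotoneOn ψ (Ici (0:ℝ)) := hψ_mono.monotoneOn
  have hψnn : ∀ s : ℝ, 0 ≤ s → 0 ≤ ψ s := by
    intro s hs
    calc (0:ℝ) = ψ 0 := hψ0.symm
    _ ≤ ψ s := hmono self_mem_Ici hs hs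
  -- uniform bound on distances
  have hcomp : IsCompact (x '' Icc (0:ℝ) 1) := isCompact_Icc.image_of_continuousOn hx
  obtain ⟨C, hC⟩ := Metric.isBounded_iff.1 hcomp.isBounded
  have hC0 : 0 ≤ C := by
    have h0 : x 0 ∈ x '' Icc (0:ℝ) 1 := ⟨0, by norm_num, rfl⟩
    have := hC h0 h0
    simpa using this
  have hmem : ∀ {n : ℕ} (t : Fin (n+1) → ℝ), IsDiss t 0 1 → ∀ i, t i ∈ Icc (0:ℝ) 1 := by
    intro n t ht i
    obtain ⟨hm, h0, h1⟩ := ht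
    exact ⟨h0 ▸ hm.monotone (Fin.zero_le i), h1 ▸ hm.monotone (Fin.le_last i)⟩
  have hdC : ∀ {n : ℕ} (t : Fin (n+1) → ℝ), IsDiss t 0 1 → ∀ i : Fin n,
      dist (x (t i.castSucc)) (x (t i.succ)) ≤ C := by
    intro n t ht i
    exact hC ⟨t i.castSucc, hmem t ht _, rfl⟩ ⟨t i.succ, hmem t ht _, rfl⟩
  -- iterated d₂
  have iterA : ∀ (T d₂ : ℝ), 1 ≤ d₂ → (∀ s ∈ Icc (0:ℝ) T, 2 * ψ s ≤ ψ (d₂ * s)) →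
      ∀ (k : ℕ) (u : ℝ), u ∈ Icc (0:ℝ) T → 2 ^ k * ψ (u / d₂ ^ k) ≤ ψ u := by
    intro T d₂ hd1 h k
    have hd0 : (0:ℝ) < d₂ := lt_of_lt_of_le one_pos hd1
    induction k with
    | zero => intro u hu; simp
    | succ k ih =>
      intro u hu
      have hu' : u / d₂ ∈ Icc (0:ℝ) T :=
        ⟨div_nonneg hu.1 hd0.le, le_trans (div_le_self hu.1 hd1) hu.2⟩
      have h1 := ih (u / d₂) hu'
      have h2 := h (u / d₂) hu'
      rw [mul_div_cancel₀ u hd0.ne'] at h2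
      have hrw : u / d₂ ^ (k+1) = u / d₂ / d₂ ^ k := by
        rw [div_div, ← pow_succ']
      rw [hrw]
      calc 2 ^ (k+1) * ψ (u / d₂ / d₂ ^ k) = 2 * (2 ^ k * ψ (u / d₂ / d₂ ^ k)) := by ring
      _ ≤ 2 * ψ (u / d₂) := by linarith
      _ ≤ ψ u := h2
  -- iterated Δ₂
  have iterB : ∀ (T Δ : ℝ), 0 ≤ Δ → (∀ s ∈ Icc (0:ℝ) T, ψ (2 * s) ≤ Δ * ψ s) →
      ∀ (m : ℕ) (s : ℝ), 0 ≤ s → 2 ^ m * s ≤ T → ψ (2 ^ m * s) ≤ Δ ^ m * ψ s := by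
    intro T Δ hΔ0 h m
    induction m with
    | zero => intro s hs _; simp
    | succ m ih =>
      intro s hs hsT
      have h2m : (0:ℝ) ≤ 2 ^ m * s := by positivity
      have hle : 2 ^ m * s ≤ 2 ^ (m+1) * s := by
        have : (2:ℝ) ^ m ≤ 2 ^ (m+1) := by
          apply pow_le_pow_right₀ (by norm_num); omega
        nlinarith
      have hmem' : 2 ^ m * s ∈ Icc (0:ℝ) T := ⟨h2m, le_trans hle hsT⟩
      have h1 := h (2 ^ m * s) hmem'
      have h2 := ih s hs (le_trans hle hsT)
      have hrw : (2:ℝ) ^ (m+1) * s = 2 * (2 ^ m * s) := by ring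
      rw [hrw]
      calc ψ (2 * (2 ^ m * s)) ≤ Δ * ψ (2 ^ m * s) := h1
      _ ≤ Δ * (Δ ^ m * ψ s) := by nlinarith
      _ = Δ ^ (m+1) * ψ s := by ring
  constructor
  · rintro ⟨M, hM⟩
    set T : ℝ := C + 1 with hT
    have hT0 : 0 < T := by linarith
    obtain ⟨d₂, hd₂0, hd₂⟩ := hd2loc T hT0
    set D : ℝ := max d₂ 1 with hD
    have hD1 : 1 ≤ D := le_max_right _ _
    have hD0 : (0:ℝ) < D := lt_of_lt_of_le one_pos hD1
    have hd2' : ∀ s ∈ Icc (0:ℝ) T, 2 * ψ s ≤ ψ (D * s) := by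
      intro s hs
      refine le_trans (hd₂ s hs) (hmono ?_ ?_ ?_)
      · exact mul_nonneg hd₂0.le hs.1
      · exact mul_nonneg hD0.le hs.1
      · exact mul_le_mul_of_nonneg_right (le_max_left _ _) hs.1
    obtain ⟨k, hk⟩ := pow_unbounded_of_one_lt M (one_lt_two : (1:ℝ) < 2)
    refine ⟨D ^ k, by positivity, ?_⟩
    intro n t ht
    have hp : (0:ℝ) < 2 ^ k := by positivity
    have hsum : (2:ℝ) ^ k * ∑ i : Fin n, ψ (dist (x (t i.castSucc)) (x (t i.succ)) / D ^ k) ≤ M := by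
      rw [Finset.mul_sum]
      refine le_trans (Finset.sum_le_sum ?_) (hM n t ht)
      intro i _
      exact iterA T D hD1 hd2' k _ ⟨dist_nonneg, by linarith [hdC t ht i]⟩
    nlinarith [hψnn (dist (x (t (0:Fin (n+1)))) (x (t 0))) dist_nonneg]
  · rintro ⟨ε, hε, hεadm⟩
    obtain ⟨m, hm⟩ := pow_unbounded_of_one_lt ε (one_lt_two : (1:ℝ) < 2)
    set T : ℝ := 2 ^ m * (C / ε) + 1 with hT
    have hCε : 0 ≤ C / ε := div_nonneg hC0 hε.le
    have hT0 : 0 < T := by positivity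
    obtain ⟨Δ₀, hΔ₀0, hΔ₀⟩ := hΔ2loc T hT0
    set Δ : ℝ := max Δ₀ 1 with hΔ
    have hΔ1 : 1 ≤ Δ := le_max_right _ _
    have hΔ' : ∀ s ∈ Icc (0:ℝ) T, ψ (2 * s) ≤ Δ * ψ s := by
      intro s hs
      refine le_trans (hΔ₀ s hs) ?_
      exact mul_le_mul_of_nonneg_right (le_max_left _ _) (hψnn s hs.1)
    refine ⟨Δ ^ m, ?_⟩
    intro n t ht
    have key : ∀ i : Fin n,
        ψ (dist (x (t i.castSucc)) (x (t i.succ)))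
          ≤ Δ ^ m * ψ (dist (x (t i.castSucc)) (x (t i.succ)) / ε) := by
      intro i
      set d : ℝ := dist (x (t i.castSucc)) (x (t i.succ)) with hd
      have hd0 : 0 ≤ d := dist_nonneg
      have hdε : 0 ≤ d / ε := div_nonneg hd0 hε.le
      have hdCd : d ≤ C := hdC t ht i
      have h1 : d ≤ 2 ^ m * (d / ε) := by
        have he : ε * (d / ε) = d := by field_simp
        nlinarith [mul_le_mul_of_nonneg_right hm.le hdε]
      have h2 : ψ d ≤ ψ (2 ^ m * (d / ε)) :=
        hmono hd0 (mem_Ici.2 (mul_nonneg (by positivity) hdε)) h1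
      have h3 : 2 ^ m * (d / ε) ≤ T := by
        have : d / ε ≤ C / ε := by gcongr
        nlinarith [pow_pos (zero_lt_two : (0:ℝ) < 2) m]
      have h4 := iterB T Δ (le_trans zero_le_one hΔ1) hΔ' m (d / ε) hdε h3
      exact le_trans h2 h4
    calc ∑ i : Fin n, ψ (dist (x (t i.castSucc)) (x (t i.succ)))
        ≤ ∑ i : Fin n, Δ ^ m * ψ (dist (x (t i.castSucc)) (x (t i.succ)) / ε) :=
          Finset.sum_le_sum fun i _ => key i
      _ = Δ ^ m * ∑ i : Fin n, ψ (dist (x (t i.castSucc)) (x (t i.succ)) / ε) := by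
          rw [Finset.mul_sum]
      _ ≤ Δ ^ m * 1 := by
          have := hεadm n t ht
          have hΔm : (0:ℝ) ≤ Δ ^ m := by positivity
          nlinarith
      _ = Δ ^ m := mul_one _
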